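/- Fix ρ > 0 and K ≥ 2. For scoring vectors u, v ∈ ℝ^K with ∑_k u_k = 0 and ∑_k v_k = 0, let h(u) = argmax_k u_k (any maximizer) and let y ∈ {1,…,K}. Then 𝟙[h(u) ≠ y] ≤ L^ρ(v, y) + (1/K)·‖M^ρ(u) − M^ρ(v)‖_1, where L^ρ(v, y) = ∑_{k=1}^K Φ_ρ(μ_k(v, y)) and M^ρ is the matrix of absolute-margin violations M^ρ_{i,j}(w) = Φ_ρ(μ_i(w, j)). -/

import Mathlib

open MeasureTheory Finset

/-- The ramp loss with margin `ρ`. -/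
noncomputable def ramp (ρ x : ℝ) : ℝ :=
  if ρ ≤ x then 0 else if x ≤ 0 then 1 else 1 - x / ρ

/-- The absolute margin function: `margin w y k = w k` if `k = y`, else `-w k`. -/
def margin {K : ℕ} (w : Fin K → ℝ) (y k : Fin K) : ℝ :=
  if k = y then w k else -w k

/-- Entrywise L1 distance between the matrices of absolute margin violations
`M^ρ(u)` and `M^ρ(v)`, where `M^ρ_{i,j}(w) = Φ_ρ(μ_i(w,j))`. -/
noncomputable def l1diff (ρ : ℝ) {K : ℕ} (u v : Fin K → ℝ) : ℝ :=
  ∑ i : Fin K, ∑ j : Fin K, |ramp ρ (margin u j i) - ramp ρ (margin v j i)|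

/-- The margin-based multi-class loss `L^ρ(w, y) = ∑_k Φ_ρ(μ_k(w,y))`. -/
noncomputable def Lmargin (ρ : ℝ) {K : ℕ} (w : Fin K → ℝ) (y : Fin K) : ℝ :=
  ∑ k : Fin K, ramp ρ (margin w y k)

lemma ramp_nonneg {ρ : ℝ} (hρ : 0 < ρ) (x : ℝ) : 0 ≤ ramp ρ x := by
  unfold ramp
  split_ifs with h1 h2
  · norm_num
  · norm_num
  · push_neg at h1 h2
    have : x / ρ ≤ 1 := by rw [div_le_one hρ]; linarith
    linarith

lemma ramp_le_one {ρ : ℝ} (hρ : 0 < ρ) (x : ℝ) : ramp ρ x ≤ 1 := by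
  unfold ramp
  split_ifs with h1 h2
  · norm_num
  · norm_num
  · push_neg at h1 h2
    have : 0 ≤ x / ρ := div_nonneg h2.le hρ.le
    linarith

lemma ramp_of_nonpos {ρ : ℝ} (hρ : 0 < ρ) {x : ℝ} (hx : x ≤ 0) : ramp ρ x = 1 := by
  unfold ramp
  rw [if_neg (by linarith), if_pos hx]

lemma ramp_anti {ρ : ℝ} (hρ : 0 < ρ) {x y : ℝ} (h : x ≤ y) : ramp ρ y ≤ ramp ρ x := by
  unfold ramp
  have hxy : x / ρ ≤ y / ρ := by gcongr
  split_ifs with h1 h2 h3 h4 h5 h6 h7 <;> (try push_neg at *) <;>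
    first
      | linarith
      | (have hxρ : x / ρ ≤ 1 := by rw [div_le_one hρ]; linarith
         linarith)
      | (have hyρ : 0 ≤ y / ρ := div_nonneg (by linarith) hρ.le
         linarith)
      | (have hxρ : 0 ≤ x / ρ := div_nonneg (by linarith) hρ.le
         have hyρ : y / ρ ≤ 1 := by rw [div_le_one hρ]; linarith
         linarith)

lemma one_le_ramp_add_ramp_neg {ρ : ℝ} (hρ : 0 < ρ) (x : ℝ) :
    1 ≤ ramp ρ x + ramp ρ (-x) := by
  rcases le_or_gt x 0 with h | h
  · rw [ramp_of_nonpos hρ h]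
    have := ramp_nonneg hρ (-x)
    linarith
  · rw [ramp_of_nonpos hρ (by linarith : -x ≤ 0)]
    have := ramp_nonneg hρ x
    linarith

theorem indicator_le_loss_add_mcsd {K : ℕ} (hK : 2 ≤ K) (ρ : ℝ) (hρ : 0 < ρ)
    (u v : Fin K → ℝ) (hu : ∑ k : Fin K, u k = 0) (hv : ∑ k : Fin K, v k = 0)
    (iu : Fin K) (hiu : ∀ k : Fin K, u k ≤ u iu) (y : Fin K) :
    (if iu ≠ y then (1 : ℝ) else 0) ≤
      Lmargin ρ v y + (1 / (K : ℝ)) * l1diff ρ u v := by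
  have hKpos : (0 : ℝ) < K := by positivity
  have hK1 : (1 : ℝ) ≤ K := by exact_mod_cast Nat.one_le_of_lt hK
  have hL0 : 0 ≤ Lmargin ρ v y := Finset.sum_nonneg fun k _ => ramp_nonneg hρ _
  have hD0 : 0 ≤ l1diff ρ u v :=
    Finset.sum_nonneg fun i _ => Finset.sum_nonneg fun j _ => abs_nonneg _
  by_cases hy : iu = y
  · simp only [hy, ne_eq, not_true_eq_false, if_false]
    have : 0 ≤ (1 / (K : ℝ)) * l1diff ρ u v := by positivity
    linarith
  -- main case
  simp only [ne_eq, hy, not_false_eq_true, if_true]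
  have huiu : 0 ≤ u iu := by
    have h1 : ∑ k : Fin K, u k ≤ ∑ _k : Fin K, u iu :=
      Finset.sum_le_sum fun k _ => hiu k
    rw [hu, Finset.sum_const, Finset.card_univ, Fintype.card_fin, nsmul_eq_mul] at h1
    nlinarith
  set b : ℝ := ramp ρ (u iu) with hb
  set F : Fin K → ℝ := fun i =>
    (K : ℝ) * ramp ρ (margin v y i) +
      ∑ j : Fin K, |ramp ρ (margin u j i) - ramp ρ (margin v j i)| with hF
  set G : Fin K → ℝ := fun i => if i = iu then (K : ℝ) - b else if i = y then b else 0
    with hG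
  have hGsum : ∑ i : Fin K, G i = (K : ℝ) := by
    rw [← Finset.sum_subset (Finset.subset_univ ({iu, y} : Finset (Fin K)))
      (by intro x _ hx
          simp only [Finset.mem_insert, Finset.mem_singleton, not_or] at hx
          simp [hG, hx.1, hx.2])]
    rw [Finset.sum_pair hy]
    have hyiu : ¬ y = iu := fun h => hy h.symm
    simp [hG, hy, hyiu]
  have hGF : ∀ i ∈ Finset.univ, G i ≤ F i := by
    intro i _
    by_cases hiiu : i = iu
    · subst hiiu
      simp only [hG, hF, eq_self_iff_true, if_true]
      have hmv : margin v y i = -v i := by simp [margin, hy]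
      set c : ℝ := ramp ρ (-v i) with hc
      set d : ℝ := ramp ρ (v i) with hd
      have hcd : 1 ≤ c + d := by
        have := one_le_ramp_add_ramp_neg hρ (v i)
        linarith
      have hc1 : c ≤ 1 := ramp_le_one hρ _
      have hinner : (d - b) + ((K : ℝ) - 1) * (1 - c) ≤
          ∑ j : Fin K, |ramp ρ (margin u j i) - ramp ρ (margin v j i)| := by
        have hpt : ∀ j : Fin K,
            (if j = i then d - b else 1 - c) ≤
              |ramp ρ (margin u j i) - ramp ρ (margin v j i)| := by
          intro j
          by_cases hji : j = i
          · subst hji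
            simp only [margin, if_pos rfl]
            exact le_trans (le_abs_self _) (le_of_eq (abs_sub_comm d b))
          · have hij' : ¬ i = j := fun h => hji h.symm
            simp only [margin, if_neg hji, if_neg hij']
            rw [ramp_of_nonpos hρ (by linarith : -u i ≤ 0)]
            rw [abs_of_nonneg (by linarith [ramp_le_one hρ (-v i)] : (0:ℝ) ≤ 1 - ramp ρ (-v i))]
        have heq : ∑ j : Fin K, (if j = i then d - b else 1 - c)
            = (d - b) + ((K : ℝ) - 1) * (1 - c) := by
          rw [← Finset.add_sum_erase _ _ (Finset.mem_univ i)]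
          rw [if_pos rfl]
          congr 1
          rw [Finset.sum_congr rfl (fun j hj => if_neg (Finset.ne_of_mem_erase hj))]
          rw [Finset.sum_const, Finset.card_erase_of_mem (Finset.mem_univ i),
            Finset.card_univ, Fintype.card_fin, nsmul_eq_mul,
            Nat.cast_sub (by omega : 1 ≤ K), Nat.cast_one]
        rw [← heq]
        exact Finset.sum_le_sum fun j _ => hpt j
      rw [hmv, ← hc]
      have hring : (K : ℝ) * c + ((d - b) + ((K : ℝ) - 1) * (1 - c))
          = c + d - b + (K : ℝ) - 1 := by ring
      linarith
    · by_cases hiy : i = y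
      · subst hiy
        simp only [hG, hF, hiiu, if_false, eq_self_iff_true, if_true]
        have hmv : margin v i i = v i := by simp [margin]
        set d : ℝ := ramp ρ (v i) with hd
        have hby : b ≤ ramp ρ (u i) := ramp_anti hρ (hiu i)
        have hterm : ramp ρ (u i) - d ≤
            ∑ j : Fin K, |ramp ρ (margin u j i) - ramp ρ (margin v j i)| := by
          have h1 : ramp ρ (u i) - d ≤ |ramp ρ (margin u i i) - ramp ρ (margin v i i)| := by
            simp only [margin, if_pos rfl]
            exact le_abs_self _
          exact le_trans h1 (Finset.single_le_sum
            (f := fun j => |ramp ρ (margin u j i) - ramp ρ (margin v j i)|)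
            (fun j _ => abs_nonneg _) (Finset.mem_univ i))
        have hd0 : 0 ≤ d := ramp_nonneg hρ _
        rw [hmv, ← hd]
        nlinarith [mul_nonneg (sub_nonneg.mpr hK1) hd0]
      · simp only [hG, hF, hiiu, hiy, if_false]
        have h1 : 0 ≤ (K : ℝ) * ramp ρ (margin v y i) := by
          have := ramp_nonneg hρ (margin v y i); positivity
        have h2 : 0 ≤ ∑ j : Fin K, |ramp ρ (margin u j i) - ramp ρ (margin v j i)| :=
          Finset.sum_nonneg fun j _ => abs_nonneg _
        linarith
  have hkey : (K : ℝ) ≤ (K : ℝ) * Lmargin ρ v y + l1diff ρ u v := by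
    have h := Finset.sum_le_sum hGF
    rw [hGsum] at h
    calc (K : ℝ) ≤ ∑ i : Fin K, F i := h
      _ = (K : ℝ) * Lmargin ρ v y + l1diff ρ u v := by
          simp only [hF, Finset.sum_add_distrib, Lmargin, l1diff, Finset.mul_sum]
  rw [show Lmargin ρ v y + 1 / (K : ℝ) * l1diff ρ u v
      = ((K : ℝ) * Lmargin ρ v y + l1diff ρ u v) / K by field_simp]
  rw [le_div_iff₀ hKpos]
  linarith
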